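/- For all real x ≥ 2 and y ≥ 2, the tail sum satisfies ∑_{k=2}^∞ x^{k-1} · y^{x - x^k} ≤ 2. -/

import Mathlib

open Real

private lemma self_le_two_rpow_sub_one {x : ℝ} (hx : 2 ≤ x) : x ≤ (2:ℝ) ^ (x - 1) := by
  have h2 : (0:ℝ) < 2 := by norm_num
  have hlog : (0.6931471803:ℝ) < Real.log 2 := Real.log_two_gt_d9
  have hexp : (x - 2) * Real.log 2 + 1 ≤ Real.exp ((x - 2) * Real.log 2) :=
    Real.add_one_le_exp _
  have h1 : (2:ℝ) ^ (x - 2) = Real.exp ((x - 2) * Real.log 2) := by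
    rw [Real.rpow_def_of_pos h2, mul_comm]
  have h3 : x ≤ 2 * ((x - 2) * Real.log 2 + 1) := by nlinarith [hlog]
  calc x ≤ 2 * ((x - 2) * Real.log 2 + 1) := h3
    _ ≤ 2 * (2:ℝ) ^ (x - 2) := by rw [h1]; nlinarith [hexp]
    _ = (2:ℝ) ^ (x - 1) := by
        rw [show x - 1 = 1 + (x - 2) by ring, Real.rpow_add h2, Real.rpow_one]

private lemma term_le (x y : ℝ) (hx : 2 ≤ x) (hy : 2 ≤ y) (k : ℕ) :
    x ^ ((k : ℝ) + 1) * y ^ (x - x ^ ((k : ℝ) + 2)) ≤ (1/2 : ℝ) ^ k := by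
  have hx0 : (0:ℝ) < x := by linarith
  have hx1 : (1:ℝ) ≤ x := by linarith
  have h2 : (0:ℝ) < 2 := by norm_num
  -- 2^(k+1) ≤ x^(k+1)
  have hpow : (2:ℝ) ^ ((k:ℝ) + 1) ≤ x ^ ((k:ℝ) + 1) :=
    Real.rpow_le_rpow (by norm_num) hx (by positivity)
  have hk2 : ((k:ℝ) + 2) ≤ (2:ℝ) ^ ((k:ℝ) + 1) := by
    have : (k + 2 : ℕ) ≤ 2 ^ (k + 1) := Nat.lt_two_pow_self (n := k + 1)
    calc ((k:ℝ) + 2) = ((k + 2 : ℕ) : ℝ) := by push_cast; ring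
      _ ≤ ((2 ^ (k+1) : ℕ) : ℝ) := by exact_mod_cast this
      _ = (2:ℝ) ^ ((k:ℝ) + 1) := by
          push_cast
          rw [← Real.rpow_natCast 2 (k+1)]
          push_cast; ring_nf
  -- x^(k+2) = x^(k+1) * x
  have hsplit : x ^ ((k:ℝ) + 2) = x ^ ((k:ℝ) + 1) * x := by
    rw [← Real.rpow_add_one hx0.ne' ((k:ℝ) + 1)]; ring_nf
  have hxk1 : ((k:ℝ) + 2) ≤ x ^ ((k:ℝ) + 1) := le_trans hk2 hpow
  have hxbig : ((k:ℝ) + 2) * x - 1 ≤ x ^ ((k:ℝ) + 2) := by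
    rw [hsplit]; nlinarith [hxk1, hx0]
  -- x - x^(k+2) ≤ 0
  have hle : x ≤ x ^ ((k:ℝ) + 2) := by
    calc x = x ^ (1:ℝ) := (Real.rpow_one x).symm
      _ ≤ x ^ ((k:ℝ) + 2) := Real.rpow_le_rpow_of_exponent_le hx1 (by have := Nat.cast_nonneg (α := ℝ) k; linarith)
  -- Step 1: x^(k+1) ≤ 2^((k+1)*(x-1))
  have step1 : x ^ ((k:ℝ) + 1) ≤ (2:ℝ) ^ (((k:ℝ) + 1) * (x - 1)) := by
    calc x ^ ((k:ℝ) + 1) ≤ ((2:ℝ) ^ (x - 1)) ^ ((k:ℝ) + 1) :=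
          Real.rpow_le_rpow hx0.le (self_le_two_rpow_sub_one hx) (by positivity)
      _ = (2:ℝ) ^ (((k:ℝ) + 1) * (x - 1)) := by
          rw [← Real.rpow_mul h2.le]
          ring_nf
  have step1' : x ^ ((k:ℝ) + 1) ≤ (2:ℝ) ^ (((k:ℝ) + 1) * (x - 1)) := step1
  -- Step 2: y^(x - x^(k+2)) ≤ 2^(x - x^(k+2))
  have step2 : y ^ (x - x ^ ((k:ℝ) + 2)) ≤ (2:ℝ) ^ (x - x ^ ((k:ℝ) + 2)) :=
    Real.rpow_le_rpow_of_nonpos h2 hy (by linarith)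
  -- combine
  have hprod : x ^ ((k:ℝ) + 1) * y ^ (x - x ^ ((k:ℝ) + 2)) ≤
      (2:ℝ) ^ (((k:ℝ) + 1) * (x - 1) + (x - x ^ ((k:ℝ) + 2))) := by
    rw [Real.rpow_add h2]
    exact mul_le_mul step1' step2 (Real.rpow_nonneg (by linarith) _)
      (Real.rpow_nonneg h2.le _)
  have hexp_le : ((k:ℝ) + 1) * (x - 1) + (x - x ^ ((k:ℝ) + 2)) ≤ -(k:ℝ) := by
    nlinarith [hxbig]
  have hfinal : (2:ℝ) ^ (((k:ℝ) + 1) * (x - 1) + (x - x ^ ((k:ℝ) + 2))) ≤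
      (2:ℝ) ^ (-(k:ℝ)) := Real.rpow_le_rpow_of_exponent_le (by norm_num) hexp_le
  have heq : (2:ℝ) ^ (-(k:ℝ)) = (1/2:ℝ) ^ k := by
    rw [Real.rpow_neg h2.le, Real.rpow_natCast, one_div, inv_pow]
  linarith [hprod, hfinal, heq ▸ hfinal]

theorem tail_sum_le_two (x y : ℝ) (hx : 2 ≤ x) (hy : 2 ≤ y) :
    ∑' k : ℕ, x ^ ((k : ℝ) + 1) * y ^ (x - x ^ ((k : ℝ) + 2)) ≤ 2 := by
  have hx0 : (0:ℝ) < x := by linarith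
  have hy0 : (0:ℝ) < y := by linarith
  have hnonneg : ∀ k : ℕ, 0 ≤ x ^ ((k : ℝ) + 1) * y ^ (x - x ^ ((k : ℝ) + 2)) := fun k =>
    mul_nonneg (Real.rpow_nonneg hx0.le _) (Real.rpow_nonneg hy0.le _)
  have hle := term_le x y hx hy
  have hg : Summable (fun k : ℕ => (1/2 : ℝ) ^ k) :=
    summable_geometric_of_lt_one (by norm_num) (by norm_num)
  have hf : Summable (fun k : ℕ => x ^ ((k : ℝ) + 1) * y ^ (x - x ^ ((k : ℝ) + 2))) :=
    Summable.of_nonneg_of_le hnonneg hle hg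
  calc ∑' k : ℕ, x ^ ((k : ℝ) + 1) * y ^ (x - x ^ ((k : ℝ) + 2))
      ≤ ∑' k : ℕ, (1/2 : ℝ) ^ k := Summable.tsum_le_tsum hle hf hg
    _ = 2 := by
        rw [tsum_geometric_of_lt_one (by norm_num) (by norm_num)]; norm_num
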